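/- Let Ω ⊂ ℝⁿ be a convex open set, let u : Ω → ℝ be differentiable, and suppose the concavity function C_u attains a local maximum at an interior point (x₁, x₃, λ) ∈ Ω × Ω × (0,1), i.e. λ ∈ (0,1), x₁, x₃ ∈ Ω and x₂ := λx₃ + (1−λ)x₁ ∈ Ω. Then the gradients of u at the three points coincide: Du(x₁) = Du(x₂) = Du(x₃). -/

import Mathlib

open Set

/-- If the concavity function
`C_u(x₁,x₃,λ) = u(λx₃+(1−λ)x₁) − λu(x₃) − (1−λ)u(x₁)` of a differentiable
function `u` on a convex open set `Ω ⊆ ℝⁿ` attains a local maximum at an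
interior point `(x₁,x₃,λ) ∈ Ω × Ω × (0,1)` (with `x₂ := λx₃+(1−λ)x₁ ∈ Ω`),
then the gradients of `u` at `x₁`, `x₂`, `x₃` coincide. -/
theorem stmt0 {n : ℕ} (Ω : Set (EuclideanSpace ℝ (Fin n)))
    (hΩo : IsOpen Ω) (hΩc : Convex ℝ Ω)
    (u : EuclideanSpace ℝ (Fin n) → ℝ) (hu : DifferentiableOn ℝ u Ω)
    (x₁ x₃ : EuclideanSpace ℝ (Fin n)) (lam : ℝ)
    (hx₁ : x₁ ∈ Ω) (hx₃ : x₃ ∈ Ω) (hlam : lam ∈ Ioo (0 : ℝ) 1)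
    (hx₂ : lam • x₃ + (1 - lam) • x₁ ∈ Ω)
    (hmax : IsLocalMax
      (fun p : EuclideanSpace ℝ (Fin n) × EuclideanSpace ℝ (Fin n) × ℝ =>
        u (p.2.2 • p.2.1 + (1 - p.2.2) • p.1) - p.2.2 * u p.2.1 - (1 - p.2.2) * u p.1)
      (x₁, x₃, lam)) :
    gradient u x₁ = gradient u (lam • x₃ + (1 - lam) • x₁) ∧
      gradient u x₃ = gradient u (lam • x₃ + (1 - lam) • x₁) := by
  let E := EuclideanSpace ℝ (Fin n)
  set x₂ : E := lam • x₃ + (1 - lam) • x₁ with hx₂def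
  have hd₁ : DifferentiableAt ℝ u x₁ := (hu x₁ hx₁).differentiableAt (hΩo.mem_nhds hx₁)
  have hd₂ : DifferentiableAt ℝ u x₂ := (hu x₂ hx₂).differentiableAt (hΩo.mem_nhds hx₂)
  have hd₃ : DifferentiableAt ℝ u x₃ := (hu x₃ hx₃).differentiableAt (hΩo.mem_nhds hx₃)
  have hl1 : (1 - lam) ≠ 0 := by have := hlam.2; linarith
  have hl0 : lam ≠ 0 := ne_of_gt hlam.1
  -- vary x₁
  have hmax1 : IsLocalMax
      (fun x : E => u (lam • x₃ + (1 - lam) • x) - lam * u x₃ - (1 - lam) * u x) x₁ := by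
    have hg : ContinuousAt (fun x : E => (x, x₃, lam)) x₁ := by fun_prop
    exact IsMaxFilter.comp_tendsto (g := fun x : E => (x, x₃, lam)) hmax hg
  have hder1 : HasFDerivAt
      (fun x : E => u (lam • x₃ + (1 - lam) • x) - lam * u x₃ - (1 - lam) * u x)
      ((fderiv ℝ u x₂).comp ((1 - lam) • ContinuousLinearMap.id ℝ E) -
        (1 - lam) • fderiv ℝ u x₁) x₁ := by
    have hin : HasFDerivAt (fun x : E => lam • x₃ + (1 - lam) • x)
        ((1 - lam) • ContinuousLinearMap.id ℝ E) x₁ :=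
      (((hasFDerivAt_id x₁).const_smul (1 - lam)).const_add (lam • x₃))
    have h2 : HasFDerivAt (fun x : E => u (lam • x₃ + (1 - lam) • x))
        ((fderiv ℝ u x₂).comp ((1 - lam) • ContinuousLinearMap.id ℝ E)) x₁ :=
      (hd₂.hasFDerivAt.comp x₁ hin)
    exact (h2.sub_const _).sub (hd₁.hasFDerivAt.const_mul (1 - lam))
  have hzero1 := hmax1.hasFDerivAt_eq_zero hder1
  have hfd1 : fderiv ℝ u x₁ = fderiv ℝ u x₂ := by
    ext v
    have := DFunLike.congr_fun hzero1 v
    simp only [ContinuousLinearMap.sub_apply, ContinuousLinearMap.comp_apply,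
      ContinuousLinearMap.smul_apply, ContinuousLinearMap.id_apply,
      ContinuousLinearMap.zero_apply, map_smul, smul_eq_mul] at this ⊢
    have h := sub_eq_zero.mp this
    field_simp at h
    exact h.symm
  -- vary x₃
  have hmax3 : IsLocalMax
      (fun x : E => u (lam • x + (1 - lam) • x₁) - lam * u x - (1 - lam) * u x₁) x₃ := by
    have hg : ContinuousAt (fun x : E => (x₁, x, lam)) x₃ := by fun_prop
    exact IsMaxFilter.comp_tendsto (g := fun x : E => (x₁, x, lam)) hmax hg
  have hder3 : HasFDerivAt
      (fun x : E => u (lam • x + (1 - lam) • x₁) - lam * u x - (1 - lam) * u x₁)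
      ((fderiv ℝ u x₂).comp (lam • ContinuousLinearMap.id ℝ E) -
        lam • fderiv ℝ u x₃) x₃ := by
    have hin : HasFDerivAt (fun x : E => lam • x + (1 - lam) • x₁)
        (lam • ContinuousLinearMap.id ℝ E) x₃ :=
      (((hasFDerivAt_id x₃).const_smul lam).add_const ((1 - lam) • x₁))
    have h2 : HasFDerivAt (fun x : E => u (lam • x + (1 - lam) • x₁))
        ((fderiv ℝ u x₂).comp (lam • ContinuousLinearMap.id ℝ E)) x₃ :=
      (hd₂.hasFDerivAt.comp x₃ hin)
    exact ((h2.sub (hd₃.hasFDerivAt.const_mul lam)).sub_const _)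
  have hzero3 := hmax3.hasFDerivAt_eq_zero hder3
  have hfd3 : fderiv ℝ u x₃ = fderiv ℝ u x₂ := by
    ext v
    have := DFunLike.congr_fun hzero3 v
    simp only [ContinuousLinearMap.sub_apply, ContinuousLinearMap.comp_apply,
      ContinuousLinearMap.smul_apply, ContinuousLinearMap.id_apply,
      ContinuousLinearMap.zero_apply, map_smul, smul_eq_mul] at this ⊢
    have h := sub_eq_zero.mp this
    field_simp at h
    exact h.symm
  constructor <;> simp only [gradient, hfd1, hfd3]
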